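/- For any K ⊆ 𝒫(T): (i) K is consistent if and only if E(K) = {D ∈ 𝔻 : K ⊆ sds(D)} is nonempty; (ii) cl_K(K) = ⋂_{D ∈ 𝔻 with K ⊆ sds(D)} sds(D); (iii) K is a coherent SDS if and only if K is consistent and K = ⋂_{D ∈ 𝔻 with K ⊆ sds(D)} sds(D). -/
import Mathlib


universe u

variable {T : Type u}

/-- `cl` is a closure operator on subsets of `T`. -/
def IsClosure (cl : Set T → Set T) : Prop :=
  (∀ A : Set T, A ⊆ cl A) ∧
  (∀ A B : Set T, A ⊆ B → cl A ⊆ cl B) ∧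
  (∀ A : Set T, cl (cl A) = cl A)

/-- `cl` is finitary: the closure of a set is the union of the closures of its
finite subsets. -/
def IsFinitary (cl : Set T → Set T) : Prop :=
  ∀ A : Set T, cl A = ⋃ F ∈ {F : Set T | F.Finite ∧ F ⊆ A}, cl F

/-- A coherent set of desirable things (SDT): closed and avoiding the forbidden
things `Tneg`. -/
def CohSDT (cl : Set T → Set T) (Tneg : Set T) (D : Set T) : Prop :=
  cl D = D ∧ D ∩ Tneg = ∅

/-- Selection maps of a collection `W` of sets of things: maps choosing an
element of each member of `W`. -/
def Sel (W : Set (Set T)) : Type u :=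
  {σ : Set T → T // ∀ A ∈ W, σ A ∈ A}

/-- A coherent set of desirable sets of things (SDS): axioms K1–K5. -/
def CohSDS (cl : Set T → Set T) (Tneg : Set T) (K : Set (Set T)) : Prop :=
  (∅ : Set T) ∉ K ∧
  (∀ A₁ ∈ K, ∀ A₂ : Set T, A₁ ⊆ A₂ → A₂ ∈ K) ∧
  (∀ A ∈ K, A \ Tneg ∈ K) ∧
  (∀ t ∈ cl (∅ : Set T), ({t} : Set T) ∈ K) ∧
  (∀ W ⊆ K, W.Nonempty →
    ∀ f : Sel W → T, (∀ σ : Sel W, f σ ∈ cl (σ.1 '' W)) → Set.range f ∈ K)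

/-- A finitely coherent SDS: axioms K1–K4 together with K5 restricted to
nonempty finite subcollections. -/
def FinCohSDS (cl : Set T → Set T) (Tneg : Set T) (K : Set (Set T)) : Prop :=
  (∅ : Set T) ∉ K ∧
  (∀ A₁ ∈ K, ∀ A₂ : Set T, A₁ ⊆ A₂ → A₂ ∈ K) ∧
  (∀ A ∈ K, A \ Tneg ∈ K) ∧
  (∀ t ∈ cl (∅ : Set T), ({t} : Set T) ∈ K) ∧
  (∀ W ⊆ K, W.Finite → W.Nonempty →
    ∀ f : Sel W → T, (∀ σ : Sel W, f σ ∈ cl (σ.1 '' W)) → Set.range f ∈ K)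

/-- A finitely coherent set of desirable finite sets of things (SDFS):
axioms F1–F5. -/
def FinCohSDFS (cl : Set T → Set T) (Tneg : Set T) (K : Set (Set T)) : Prop :=
  (∀ F ∈ K, F.Finite) ∧
  (∅ : Set T) ∉ K ∧
  (∀ F₁ ∈ K, ∀ F₂ : Set T, F₂.Finite → F₁ ⊆ F₂ → F₂ ∈ K) ∧
  (∀ F ∈ K, F \ Tneg ∈ K) ∧
  (∀ t ∈ cl (∅ : Set T), ({t} : Set T) ∈ K) ∧
  (∀ W ⊆ K, W.Finite → W.Nonempty →
    ∀ f : Sel W → T, (∀ σ : Sel W, f σ ∈ cl (σ.1 '' W)) → Set.range f ∈ K)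

/-- The set of things whose singletons belong to `K`. -/
def sdt (K : Set (Set T)) : Set T := {t | ({t} : Set T) ∈ K}

/-- The SDS of all sets of things meeting `D`. -/
def sds (D : Set T) : Set (Set T) := {A | (A ∩ D).Nonempty}

/-- The SDFS of all finite sets of things meeting `D`. -/
def sdfs (D : Set T) : Set (Set T) := {F | F.Finite ∧ (F ∩ D).Nonempty}

/-- The event `𝒟_A` of all coherent SDTs meeting `A`. -/
def evA (cl : Set T → Set T) (Tneg : Set T) (A : Set T) : Set (Set T) :=
  {D | CohSDT cl Tneg D ∧ (A ∩ D).Nonempty}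

/-- The event `E(W)` of all coherent SDTs meeting every member of `W`
(with `E(∅)` equal to the set of all coherent SDTs). -/
def ev (cl : Set T → Set T) (Tneg : Set T) (W : Set (Set T)) : Set (Set T) :=
  {D | CohSDT cl Tneg D ∧ ∀ A ∈ W, (A ∩ D).Nonempty}

/-- An SDS is conjunctive if every desirable set contains a desirable
singleton. -/
def Conjunctive (K : Set (Set T)) : Prop :=
  ∀ A ∈ K, ∃ t ∈ A, ({t} : Set T) ∈ K

/-- Completeness of an SDS. -/
def CompleteSDS (K : Set (Set T)) : Prop :=
  ∀ A₁ A₂ : Set T, A₁ ∪ A₂ ∈ K → A₁ ∈ K ∨ A₂ ∈ K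

/-- The finitary part `K^f` of an SDS. -/
def finPart (K : Set (Set T)) : Set (Set T) :=
  {A | ∃ B ∈ K, B.Finite ∧ B ⊆ A}

/-- An SDS is finitary if every desirable set has a finite desirable subset. -/
def FinitarySDS (K : Set (Set T)) : Prop :=
  ∀ A ∈ K, ∃ B, B.Finite ∧ B ⊆ A ∧ B ∈ K

/-- The lattice of events `E`. -/
def Ecal (cl : Set T → Set T) (Tneg : Set T) : Set (Set (Set T)) :=
  {E | ∃ W : Set (Set T), E = ev cl Tneg W}

/-- The lattice of finitary events `E_fin`. -/
def Efin (cl : Set T → Set T) (Tneg : Set T) : Set (Set (Set T)) :=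
  {E | ∃ W : Set (Set T), W.Finite ∧ E = ev cl Tneg W}

/-- A filter on a lattice of events `L` ordered by inclusion. -/
def IsFilterOn (L F : Set (Set (Set T))) : Prop :=
  F ⊆ L ∧ F.Nonempty ∧
  (∀ E₁ ∈ F, ∀ E₂ ∈ L, E₁ ⊆ E₂ → E₂ ∈ F) ∧
  (∀ E₁ ∈ F, ∀ E₂ ∈ F, E₁ ∩ E₂ ∈ F)

/-- A proper filter on `L`. -/
def IsProperFilterOn (L F : Set (Set (Set T))) : Prop :=
  IsFilterOn L F ∧ F ≠ L

/-- A prime filter on `L`. -/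
def IsPrimeFilterOn (L F : Set (Set (Set T))) : Prop :=
  IsProperFilterOn L F ∧
  ∀ E₁ ∈ L, ∀ E₂ ∈ L, E₁ ∪ E₂ ∈ F → E₁ ∈ F ∨ E₂ ∈ F

/-- A proper principal filter on `L`: the upset of some nonempty `E₀ ∈ L`. -/
def IsProperPrincipalFilterOn (L F : Set (Set (Set T))) : Prop :=
  ∃ E₀ ∈ L, E₀ ≠ (∅ : Set (Set T)) ∧ F = {E' | E' ∈ L ∧ E₀ ⊆ E'}

/-- The map `f̂` sending an SDS to the collection of events of its finite
subcollections. -/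
def fhat (cl : Set T → Set T) (Tneg : Set T) (K : Set (Set T)) :
    Set (Set (Set T)) :=
  {E | ∃ W : Set (Set T), W ⊆ K ∧ W.Finite ∧ E = ev cl Tneg W}

/-- The map `f` sending an SDS to the collection of events of all of its
subcollections. -/
def fprin (cl : Set T → Set T) (Tneg : Set T) (K : Set (Set T)) :
    Set (Set (Set T)) :=
  {E | ∃ W : Set (Set T), W ⊆ K ∧ E = ev cl Tneg W}

/-- The map `d` sending a collection of events to the SDS it determines. -/
def dmap (cl : Set T → Set T) (Tneg : Set T) (F : Set (Set (Set T))) :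
    Set (Set T) :=
  {A : Set T | evA cl Tneg A ∈ F}

/-- `K` is finitely consistent: it is included in some finitely coherent SDS. -/
def FinConsistent (cl : Set T → Set T) (Tneg : Set T) (K : Set (Set T)) : Prop :=
  ∃ K' : Set (Set T), FinCohSDS cl Tneg K' ∧ K ⊆ K'

/-- `K` is consistent: it is included in some coherent SDS. -/
def Consistent (cl : Set T → Set T) (Tneg : Set T) (K : Set (Set T)) : Prop :=
  ∃ K' : Set (Set T), CohSDS cl Tneg K' ∧ K ⊆ K'

/-- The finitary closure operator on SDSes (with value `𝒫(T)` when `K` is not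
finitely consistent, via the empty-intersection convention). -/
def clFin (cl : Set T → Set T) (Tneg : Set T) (K : Set (Set T)) : Set (Set T) :=
  ⋂₀ {K' : Set (Set T) | FinCohSDS cl Tneg K' ∧ K ⊆ K'}

/-- The closure operator on SDSes (with value `𝒫(T)` when `K` is not
consistent, via the empty-intersection convention). -/
def clSDS (cl : Set T → Set T) (Tneg : Set T) (K : Set (Set T)) : Set (Set T) :=
  ⋂₀ {K' : Set (Set T) | CohSDS cl Tneg K' ∧ K ⊆ K'}

section Aux

variable {cl : Set T → Set T} {Tneg : Set T}

lemma sds_cohSDS [Nonempty T] (hcl : IsClosure cl)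
    {D : Set T} (hD : CohSDT cl Tneg D) : CohSDS cl Tneg (sds D) := by
  classical
  obtain ⟨hclo, hdisj⟩ := hD
  refine ⟨?_, ?_, ?_, ?_, ?_⟩
  · simp [sds]
  · rintro A₁ ⟨t, ht, htD⟩ A₂ hsub; exact ⟨t, hsub ht, htD⟩
  · rintro A ⟨t, ht, htD⟩
    refine ⟨t, ⟨ht, fun htn => ?_⟩, htD⟩
    exact (Set.eq_empty_iff_forall_notMem.1 hdisj t) ⟨htD, htn⟩
  · intro t ht
    exact ⟨t, rfl, hclo ▸ hcl.2.1 _ _ (Set.empty_subset D) ht⟩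
  · intro W hW _hWne f hf
    set σ₀ : Set T → T := fun A =>
      if h : (A ∩ D).Nonempty then h.choose else Classical.arbitrary T with hσ₀
    have hσ₀mem : ∀ A ∈ W, σ₀ A ∈ A ∩ D := by
      intro A hA
      have h : (A ∩ D).Nonempty := hW hA
      simp only [hσ₀, dif_pos h]
      exact h.choose_spec
    have hσ₀sel : ∀ A ∈ W, σ₀ A ∈ A := fun A hA => (hσ₀mem A hA).1
    set σ : Sel W := ⟨σ₀, hσ₀sel⟩ with hσ
    have himg : σ.1 '' W ⊆ D := by
      rintro t ⟨A, hA, rfl⟩; exact (hσ₀mem A hA).2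
    have : f σ ∈ D := hclo ▸ hcl.2.1 _ _ himg (hf σ)
    exact ⟨f σ, Set.mem_range_self σ, this⟩

lemma main_lemma [Nonempty T] (hcl : IsClosure cl)
    (hsan : cl (∅ : Set T) ∩ Tneg = ∅)
    {K : Set (Set T)} (hK : CohSDS cl Tneg K) {A : Set T} (hA : A ∉ K) :
    ∃ D, CohSDT cl Tneg D ∧ K ⊆ sds D ∧ A ∩ D = ∅ := by
  classical
  obtain ⟨h1, h2, h3, h4, h5⟩ := hK
  by_cases hKne : K.Nonempty
  · by_cases hex : ∃ σ : Sel K, cl (σ.1 '' K) ∩ (Tneg ∪ A) = ∅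
    · obtain ⟨σ, hσ⟩ := hex
      refine ⟨cl (σ.1 '' K), ⟨hcl.2.2 _, ?_⟩, ?_, ?_⟩
      · apply Set.eq_empty_iff_forall_notMem.2
        intro t ⟨ht1, ht2⟩
        exact (Set.eq_empty_iff_forall_notMem.1 hσ t) ⟨ht1, Or.inl ht2⟩
      · intro B hB
        exact ⟨σ.1 B, σ.2 B hB, hcl.1 _ (Set.mem_image_of_mem _ hB)⟩
      · apply Set.eq_empty_iff_forall_notMem.2
        intro t ⟨ht1, ht2⟩
        exact (Set.eq_empty_iff_forall_notMem.1 hσ t) ⟨ht2, Or.inr ht1⟩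
    · push_neg at hex
      have hne : ∀ σ : Sel K, (cl (σ.1 '' K) ∩ (Tneg ∪ A)).Nonempty := hex
      set f : Sel K → T := fun σ => (hne σ).choose with hf0
      have hf : ∀ σ, f σ ∈ cl (σ.1 '' K) ∧ f σ ∈ Tneg ∪ A := fun σ => (hne σ).choose_spec
      have hR : Set.range f ∈ K := h5 K (subset_refl _) hKne f (fun σ => (hf σ).1)
      have hR2 : Set.range f \ Tneg ∈ K := h3 _ hR
      have hsub : Set.range f \ Tneg ⊆ A := by
        rintro t ⟨⟨σ, rfl⟩, htn⟩
        rcases (hf σ).2 with h | h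
        · exact absurd h htn
        · exact h
      exact absurd (h2 _ hR2 A hsub) hA
  · refine ⟨cl ∅, ⟨hcl.2.2 _, hsan⟩, ?_, ?_⟩
    · intro B hB; exact absurd ⟨B, hB⟩ hKne
    · apply Set.eq_empty_iff_forall_notMem.2
      intro t ⟨ht1, ht2⟩
      exact hKne ⟨{t}, h4 t ht2⟩

lemma sInter_cohSDS {𝒦 : Set (Set (Set T))} (hne : 𝒦.Nonempty)
    (h : ∀ K ∈ 𝒦, CohSDS cl Tneg K) : CohSDS cl Tneg (⋂₀ 𝒦) := by
  obtain ⟨K₀, hK₀⟩ := hne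
  refine ⟨?_, ?_, ?_, ?_, ?_⟩
  · intro hmem; exact (h K₀ hK₀).1 (hmem K₀ hK₀)
  · intro A₁ hA₁ A₂ hsub K' hK'
    exact (h K' hK').2.1 A₁ (hA₁ K' hK') A₂ hsub
  · intro A hA K' hK'
    exact (h K' hK').2.2.1 A (hA K' hK')
  · intro t ht K' hK'
    exact (h K' hK').2.2.2.1 t ht
  · intro W hW hWne f hf K' hK'
    exact (h K' hK').2.2.2.2 W (fun B hB => hW hB K' hK') hWne f hf

end Aux

/-- Conjunctive representation of consistency, the closure operator, and
coherence for SDSes. -/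
theorem conjunctive_representation (T : Type u) [Nonempty T]
    (cl : Set T → Set T) (Tneg : Set T)
    (hcl : IsClosure cl) (hsan : cl (∅ : Set T) ∩ Tneg = ∅)
    (K : Set (Set T)) :
    (Consistent cl Tneg K ↔
      {D : Set T | CohSDT cl Tneg D ∧ K ⊆ sds D}.Nonempty) ∧
    (clSDS cl Tneg K =
      ⋂ D ∈ {D : Set T | CohSDT cl Tneg D ∧ K ⊆ sds D}, sds D) ∧
    (CohSDS cl Tneg K ↔
      (Consistent cl Tneg K ∧
        K = ⋂ D ∈ {D : Set T | CohSDT cl Tneg D ∧ K ⊆ sds D}, sds D)) := by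
  classical
  set S : Set (Set T) := {D : Set T | CohSDT cl Tneg D ∧ K ⊆ sds D} with hS
  have part1 : Consistent cl Tneg K ↔ S.Nonempty := by
    constructor
    · rintro ⟨K', hK', hsub⟩
      obtain ⟨D, hD, hsubD, -⟩ := main_lemma hcl hsan hK' hK'.1
      exact ⟨D, hD, hsub.trans hsubD⟩
    · rintro ⟨D, hD, hsub⟩
      exact ⟨sds D, sds_cohSDS hcl hD, hsub⟩
  refine ⟨part1, ?_, ?_⟩
  · apply Set.Subset.antisymm
    · intro A hA
      apply Set.mem_iInter₂.2
      intro D hD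
      exact hA (sds D) ⟨sds_cohSDS hcl hD.1, hD.2⟩
    · intro A hA K' ⟨hK', hsub⟩
      by_contra hAK
      obtain ⟨D, hD, hsubD, hdisj⟩ := main_lemma hcl hsan hK' hAK
      have hDS : D ∈ S := ⟨hD, hsub.trans hsubD⟩
      have : A ∈ sds D := Set.mem_iInter₂.1 hA D hDS
      simp only [sds, Set.mem_setOf_eq, hdisj] at this
      exact Set.not_nonempty_empty this
  · constructor
    · intro hK
      refine ⟨⟨K, hK, subset_refl _⟩, ?_⟩
      apply Set.Subset.antisymm
      · intro A hA
        apply Set.mem_iInter₂.2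
        intro D hD
        exact hD.2 hA
      · intro A hA
        by_contra hAK
        obtain ⟨D, hD, hsubD, hdisj⟩ := main_lemma hcl hsan hK hAK
        have : A ∈ sds D := Set.mem_iInter₂.1 hA D ⟨hD, hsubD⟩
        simp only [sds, Set.mem_setOf_eq, hdisj] at this
        exact Set.not_nonempty_empty this
    · rintro ⟨hcons, heq⟩
      obtain ⟨D₀, hD₀⟩ := part1.1 hcons
      rw [heq, ← Set.sInter_image]
      apply sInter_cohSDS
      · exact ⟨sds D₀, Set.mem_image_of_mem _ hD₀⟩
      · rintro K' ⟨D, hD, rfl⟩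
        exact sds_cohSDS hcl hD.1
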